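/- Let T : I → I be an interval exchange transformation that is ergodic with respect to Lebesgue measure. Then there exists β ∈ 𝒜 \ {π₀⁻¹(1)} such that M(β) = +∞, i.e., the backward orbit {T^{-n}(∂I_β)}_{n ≥ 1} never hits a left endpoint ∂I_α with π₁(α) ≠ 1. -/
import Mathlib


open MeasureTheory Set
open scoped Classical

/-- An interval exchange transformation (IET) on the interval `[a, b)`:
an alphabet `Fin d`, bijections `perm0`, `perm1 : Fin d ≃ Fin d` describing the order of
the exchanged intervals before and after applying the map, and a positive length vector
`len` summing up to `b - a`.  The permutation datum is assumed non-reducible. -/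
structure IET where
  d : ℕ
  hd : 0 < d
  a : ℝ
  b : ℝ
  hab : a < b
  perm0 : Fin d ≃ Fin d
  perm1 : Fin d ≃ Fin d
  len : Fin d → ℝ
  len_pos : ∀ α, 0 < len α
  len_sum : ∑ α, len α = b - a
  irred : ∀ k : ℕ, 0 < k → k < d → ¬ (∀ α, (perm0 α : ℕ) < k ↔ (perm1 α : ℕ) < k)

namespace IET

variable (T : IET)

/-- The left endpoint `∂I_α` of the exchanged interval `I_α`. -/
noncomputable def lep (α : Fin T.d) : ℝ :=
  T.a + ∑ β ∈ Finset.univ.filter (fun β => T.perm0 β < T.perm0 α), T.len β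

/-- The left endpoint of the image interval `T(I_α)`. -/
noncomputable def lepImg (α : Fin T.d) : ℝ :=
  T.a + ∑ β ∈ Finset.univ.filter (fun β => T.perm1 β < T.perm1 α), T.len β

/-- The translation amount on `I_α`. -/
noncomputable def transl (α : Fin T.d) : ℝ := T.lepImg α - T.lep α

/-- The exchanged interval `I_α`. -/
noncomputable def interval (α : Fin T.d) : Set ℝ :=
  Set.Ico (T.lep α) (T.lep α + T.len α)

/-- The image interval `T(I_α)`. -/
noncomputable def intervalImg (α : Fin T.d) : Set ℝ :=
  Set.Ico (T.lepImg α) (T.lepImg α + T.len α)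

/-- The IET as a self-map of `ℝ`: it translates each `I_α` onto its image and is
the identity outside `[a, b)`. -/
noncomputable def toFun (x : ℝ) : ℝ :=
  x + ∑ α, if x ∈ T.interval α then T.transl α else 0

/-- The inverse IET `T⁻¹` as a self-map of `ℝ`. -/
noncomputable def invFun (x : ℝ) : ℝ :=
  x + ∑ α, if x ∈ T.intervalImg α then -T.transl α else 0

/-- The iterate `T^n`, `n : ℤ` (negative iterates via `invFun`). -/
noncomputable def iter (n : ℤ) (x : ℝ) : ℝ :=
  if 0 ≤ n then T.toFun^[n.toNat] x else T.invFun^[(-n).toNat] x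

/-- `M(β) = min {n ≥ 1 | T^{-n}(∂I_β) = ∂I_α for some α with π₁ α ≠ 1}`, with the
convention `M(π₀⁻¹ 1) = 1`, and `∞` if no such `n` exists. -/
noncomputable def M (β : Fin T.d) : ℕ∞ :=
  if (T.perm0 β : ℕ) = 0 then 1
  else sInf {e : ℕ∞ | ∃ n : ℕ, e = (n : ℕ∞) ∧ 1 ≤ n ∧
    ∃ α : Fin T.d, (T.perm1 α : ℕ) ≠ 0 ∧ T.invFun^[n] (T.lep β) = T.lep α}

/-- `N(β) = min {n ≥ 1 | T^{n}(∂I_β) = ∂I_α for some α with π₀ α ≠ 1}`, with the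
convention `N(π₁⁻¹ 1) = 1`, and `∞` if no such `n` exists. -/
noncomputable def N (β : Fin T.d) : ℕ∞ :=
  if (T.perm1 β : ℕ) = 0 then 1
  else sInf {e : ℕ∞ | ∃ n : ℕ, e = (n : ℕ∞) ∧ 1 ≤ n ∧
    ∃ α : Fin T.d, (T.perm0 α : ℕ) ≠ 0 ∧ T.toFun^[n] (T.lep β) = T.lep α}

/-- `s` is a (non-trivial) connection of `T`: the orbit segment
`{T^{-k}(∂I_β) | 0 ≤ k ≤ n}` where `π₀ β ≠ 1`, `π₁ α ≠ 1`, `n ≥ 1` and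
`T^{-n}(∂I_β) = ∂I_α`. -/
def IsConnection (s : Set ℝ) : Prop :=
  ∃ (β α : Fin T.d) (n : ℕ), (T.perm0 β : ℕ) ≠ 0 ∧ (T.perm1 α : ℕ) ≠ 0 ∧ 1 ≤ n ∧
    T.invFun^[n] (T.lep β) = T.lep α ∧
    s = (fun k : ℕ => T.invFun^[k] (T.lep β)) '' {k : ℕ | k ≤ n}

/-- `T` is symmetric: `π₁ ∘ π₀⁻¹ (i) = d + 1 - i` (here with `Fin d` indexing:
`perm1 α + perm0 α + 1 = d`). -/
def IsSymm : Prop := ∀ α, (T.perm1 α : ℕ) + (T.perm0 α : ℕ) + 1 = T.d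

/-- The midpoint `c_α` of the exchanged interval `I_α`. -/
noncomputable def center (α : Fin T.d) : ℝ := T.lep α + T.len α / 2

/-- The midpoint `c_{1/2}` of the interval `I = [a, b)`. -/
noncomputable def centerHalf : ℝ := (T.a + T.b) / 2

/-- Midpoints indexed by `𝒜 ∪ {1/2}`; `none` plays the role of `1/2`. -/
noncomputable def centerOpt (β : Option (Fin T.d)) : ℝ :=
  match β with
  | none => T.centerHalf
  | some α => T.center α

/-- `δ_{1/2}`. -/
def deltaHalf (β : Option (Fin T.d)) : ℕ :=
  match β with
  | none => 1
  | some _ => 0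

/-- The symmetric reflection `𝓘_I (x) = a + b - x` of `I = [a, b)`. -/
noncomputable def refl (x : ℝ) : ℝ := T.a + T.b - x

/-- The first return time `r_J(x) = min {n ≥ 1 | T^n x ∈ J}`. -/
noncomputable def returnTime (J : Set ℝ) (x : ℝ) : ℕ :=
  sInf {n : ℕ | 1 ≤ n ∧ T.toFun^[n] x ∈ J}

/-- The first return map `T_J`. -/
noncomputable def firstReturn (J : Set ℝ) (x : ℝ) : ℝ := T.toFun^[T.returnTime J x] x

/-- The first backward return time `b_J(x) = min {n ≥ 1 | T^{-n} x ∈ J}`. -/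
noncomputable def backTime (J : Set ℝ) (x : ℝ) : ℕ :=
  sInf {n : ℕ | 1 ≤ n ∧ T.invFun^[n] x ∈ J}

/-- The first backward return map `p_J` (the inverse of the first return map `T_J`). -/
noncomputable def backReturn (J : Set ℝ) (x : ℝ) : ℝ := T.invFun^[T.backTime J x] x

/-- `m_{J,α} = inf {n ≥ 0 | T^{-n}(∂I_α) ∈ interior J}`. -/
noncomputable def mJ (J : Set ℝ) (α : Fin T.d) : ℕ :=
  sInf {n : ℕ | T.invFun^[n] (T.lep α) ∈ interior J}

/-- `J` is of form (★): a subinterval `[a_J, b_J) ⊆ I` whose endpoints are iterates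
`T^{m₀}(∂I_{α_J})`, `T^{n₀}(∂I_{β_J})` of left endpoints which do not visit `J` at any
earlier time between `0` and `m₀` (resp. `n₀`). -/
def IsStarForm (J : Set ℝ) : Prop :=
  ∃ (aJ bJ : ℝ) (αJ βJ : Fin T.d) (m₀ n₀ : ℤ),
    aJ < bJ ∧ J = Set.Ico aJ bJ ∧ J ⊆ Set.Ico T.a T.b ∧
    aJ = T.iter m₀ (T.lep αJ) ∧ bJ = T.iter n₀ (T.lep βJ) ∧
    (∀ m : ℤ, (0 ≤ m ∧ m ≤ m₀ ∨ m₀ ≤ m ∧ m ≤ 0) → m ≠ m₀ → T.iter m (T.lep αJ) ∉ J) ∧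
    (∀ n : ℤ, (0 ≤ n ∧ n ≤ n₀ ∨ n₀ ≤ n ∧ n ≤ 0) → n ≠ n₀ → T.iter n (T.lep βJ) ∉ J)

/-- `J` is a `β`-symmetric interval (`β : Option (Fin T.d)`, `none` = `1/2`-symmetric):
`J = [c_β - Δ, c_β + Δ)` with `Δ > 0`, contained in `I_β` (resp. in `I`). -/
def IsSymmetricInterval (J : Set ℝ) (β : Option (Fin T.d)) : Prop :=
  ∃ Δ : ℝ, 0 < Δ ∧ J = Set.Ico (T.centerOpt β - Δ) (T.centerOpt β + Δ) ∧
    (match β with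
      | some γ => J ⊆ T.interval γ
      | none => J ⊆ Set.Ico T.a T.b)

/-- `x` is a left endpoint of one of the intervals exchanged by the first return map
`T_J`, where `J = [aJ, bJ)`: either `x = aJ`, or the forward orbit of `x` before its
first return to `J` meets a left endpoint `∂I_α` of `T` or the right endpoint `bJ`. -/
def IsExchLeftEndpoint (J : Set ℝ) (aJ bJ : ℝ) (x : ℝ) : Prop :=
  x = aJ ∨ ∃ k : ℕ, k < T.returnTime J x ∧
    ((∃ α : Fin T.d, T.toFun^[k] x = T.lep α) ∨ (1 ≤ k ∧ T.toFun^[k] x = bJ))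

/-- A Rokhlin tower decomposition of `I = [a, b)` over `J = [aJ, bJ)` associated with the
first return map `T_J`: the bases `[base γ, base γ + blen γ)` partition `J`, the return
time on the base `γ` is constantly `h γ`, each `T^i` (`i ≤ h γ`) acts as a translation on
the base `γ`, and the tower levels `T^i([base γ, base γ + blen γ))`, `i < h γ`, are
pairwise disjoint and partition `I`. -/
def IsTowerDecomp (aJ bJ : ℝ) {k : ℕ} (base blen : Fin k → ℝ) (h : Fin k → ℕ) : Prop :=
  (∀ γ, 0 < blen γ) ∧ (∀ γ, 1 ≤ h γ) ∧
  Pairwise (Function.onFun Disjoint fun γ => Set.Ico (base γ) (base γ + blen γ)) ∧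
  (⋃ γ, Set.Ico (base γ) (base γ + blen γ)) = Set.Ico aJ bJ ∧
  (∀ γ, ∀ i ≤ h γ, ∀ x ∈ Set.Ico (base γ) (base γ + blen γ),
    T.toFun^[i] x - T.toFun^[i] (base γ) = x - base γ) ∧
  (∀ γ, ∀ x ∈ Set.Ico (base γ) (base γ + blen γ), T.returnTime (Set.Ico aJ bJ) x = h γ) ∧
  (⋃ γ, ⋃ i ∈ Finset.range (h γ), T.toFun^[i] '' Set.Ico (base γ) (base γ + blen γ))
    = Set.Ico T.a T.b ∧
  (∀ γ γ' : Fin k, ∀ i i' : ℕ, i < h γ → i' < h γ' → (γ, i) ≠ (γ', i') →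
    Disjoint (T.toFun^[i] '' Set.Ico (base γ) (base γ + blen γ))
      (T.toFun^[i'] '' Set.Ico (base γ') (base γ' + blen γ')))

/-- Replace the length data of an IET, keeping the combinatorial data. -/
noncomputable abbrev replaceLen (len' : Fin T.d → ℝ) (h1 : ∀ α, 0 < len' α)
    (h2 : ∑ α, len' α = T.b - T.a) : IET :=
  { T with len := len', len_pos := h1, len_sum := h2 }

end IET

open IET

namespace IET

variable (T : IET)

/-- Generic left endpoint for a permutation `e`. -/
noncomputable def L (e : Fin T.d ≃ Fin T.d) (α : Fin T.d) : ℝ :=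
  T.a + ∑ β ∈ Finset.univ.filter (fun β => e β < e α), T.len β

/-- Partial sums of lengths in the order given by `e`. -/
noncomputable def Lf (e : Fin T.d ≃ Fin T.d) (j : ℕ) : ℝ :=
  T.a + ∑ β ∈ Finset.univ.filter (fun β => (e β : ℕ) < j), T.len β

lemma lep_eq_L (α : Fin T.d) : T.lep α = T.L T.perm0 α := rfl

lemma lepImg_eq_L (α : Fin T.d) : T.lepImg α = T.L T.perm1 α := rfl

lemma L_eq_Lf (e : Fin T.d ≃ Fin T.d) (α : Fin T.d) : T.L e α = T.Lf e (e α) := by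
  unfold L Lf
  congr 1

lemma Lf_zero (e : Fin T.d ≃ Fin T.d) : T.Lf e 0 = T.a := by
  simp [Lf]

lemma Lf_mono (e : Fin T.d ≃ Fin T.d) : Monotone (T.Lf e) := by
  intro i j hij
  unfold Lf
  have hsub : Finset.univ.filter (fun β => ((e β : ℕ) < i))
      ⊆ Finset.univ.filter (fun β => ((e β : ℕ) < j)) := by
    intro β hβ
    simp only [Finset.mem_filter, Finset.mem_univ, true_and] at hβ ⊢
    omega
  have := Finset.sum_le_sum_of_subset_of_nonneg hsub
    (fun β _ _ => le_of_lt (T.len_pos β))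
  linarith

lemma Lf_d (e : Fin T.d ≃ Fin T.d) : T.Lf e T.d = T.b := by
  unfold Lf
  rw [Finset.filter_true_of_mem (fun β _ => (e β).isLt), T.len_sum]
  ring

lemma Lf_succ (e : Fin T.d ≃ Fin T.d) (α : Fin T.d) :
    T.Lf e ((e α : ℕ) + 1) = T.Lf e (e α) + T.len α := by
  unfold Lf
  have h : Finset.univ.filter (fun β => ((e β : ℕ) < (e α : ℕ) + 1))
      = insert α (Finset.univ.filter (fun β => ((e β : ℕ) < (e α : ℕ)))) := by
    ext β
    simp only [Finset.mem_insert, Finset.mem_filter, Finset.mem_univ, true_and]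
    rw [Nat.lt_succ_iff, le_iff_lt_or_eq]
    constructor
    · rintro (h | h)
      · exact Or.inr h
      · exact Or.inl (e.injective (Fin.val_injective h))
    · rintro (h | h)
      · subst h; exact Or.inr rfl
      · exact Or.inl h
  rw [h, Finset.sum_insert (by simp)]
  ring

lemma L_add_len (e : Fin T.d ≃ Fin T.d) (α : Fin T.d) :
    T.L e α + T.len α = T.Lf e ((e α : ℕ) + 1) := by
  rw [L_eq_Lf, Lf_succ]

lemma a_le_L (e : Fin T.d ≃ Fin T.d) (α : Fin T.d) : T.a ≤ T.L e α := by
  rw [L_eq_Lf]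
  have := T.Lf_mono e (Nat.zero_le (e α : ℕ))
  rwa [Lf_zero] at this

lemma L_add_len_le_b (e : Fin T.d ≃ Fin T.d) (α : Fin T.d) :
    T.L e α + T.len α ≤ T.b := by
  rw [L_add_len, ← Lf_d T e]
  exact T.Lf_mono e (Nat.succ_le_of_lt (e α).isLt)

lemma L_mem_Ico (e : Fin T.d ≃ Fin T.d) (α : Fin T.d) :
    T.L e α ∈ Set.Ico (T.L e α) (T.L e α + T.len α) :=
  ⟨le_refl _, by linarith [T.len_pos α]⟩

lemma Ico_L_subset (e : Fin T.d ≃ Fin T.d) (α : Fin T.d) :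
    Set.Ico (T.L e α) (T.L e α + T.len α) ⊆ Set.Ico T.a T.b :=
  Set.Ico_subset_Ico (T.a_le_L e α) (T.L_add_len_le_b e α)

lemma disjoint_Ico_L_aux (e : Fin T.d ≃ Fin T.d) {α α' : Fin T.d}
    (h : (e α : ℕ) < (e α' : ℕ)) :
    Disjoint (Set.Ico (T.L e α) (T.L e α + T.len α))
      (Set.Ico (T.L e α') (T.L e α' + T.len α')) := by
  have hle : T.L e α + T.len α ≤ T.L e α' := by
    rw [L_add_len, L_eq_Lf]
    exact T.Lf_mono e (Nat.succ_le_of_lt h)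
  rw [Set.disjoint_left]
  rintro x ⟨_, h2⟩ ⟨h3, _⟩
  linarith

lemma disjoint_Ico_L (e : Fin T.d ≃ Fin T.d) {α α' : Fin T.d} (h : α ≠ α') :
    Disjoint (Set.Ico (T.L e α) (T.L e α + T.len α))
      (Set.Ico (T.L e α') (T.L e α' + T.len α')) := by
  rcases Nat.lt_trichotomy (e α : ℕ) (e α' : ℕ) with hlt | heq | hgt
  · exact T.disjoint_Ico_L_aux e hlt
  · exact absurd (e.injective (Fin.val_injective heq)) h
  · exact (T.disjoint_Ico_L_aux e hgt).symm

lemma exists_mem_Ico_L (e : Fin T.d ≃ Fin T.d) {x : ℝ} (hx : x ∈ Set.Ico T.a T.b) :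
    ∃ α, x ∈ Set.Ico (T.L e α) (T.L e α + T.len α) := by
  classical
  have h0 : T.L e (e.symm ⟨0, T.hd⟩) = T.a := by
    rw [L_eq_Lf]
    have : ((e (e.symm ⟨0, T.hd⟩) : Fin T.d) : ℕ) = 0 := by simp
    rw [this, Lf_zero]
  set s := Finset.univ.filter (fun α => T.L e α ≤ x) with hs
  have hne : s.Nonempty := ⟨e.symm ⟨0, T.hd⟩, by
    simp only [hs, Finset.mem_filter, Finset.mem_univ, true_and, h0]
    exact hx.1⟩
  obtain ⟨α, hαs, hmax⟩ := Finset.exists_max_image s (fun α => (e α : ℕ)) hne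
  have hLx : T.L e α ≤ x := (Finset.mem_filter.mp hαs).2
  refine ⟨α, hLx, ?_⟩
  by_contra hcon
  push_neg at hcon
  rw [L_add_len] at hcon
  rcases Nat.lt_or_ge ((e α : ℕ) + 1) T.d with hd1 | hd1
  · set α' := e.symm ⟨(e α : ℕ) + 1, hd1⟩ with hα'
    have hval : ((e α' : Fin T.d) : ℕ) = (e α : ℕ) + 1 := by simp [hα']
    have hL' : T.L e α' ≤ x := by rw [L_eq_Lf, hval]; exact hcon
    have hmem : α' ∈ s := Finset.mem_filter.mpr ⟨Finset.mem_univ _, hL'⟩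
    have := hmax α' hmem
    omega
  · have hb : T.b ≤ x := by
      rw [← Lf_d T e]
      exact le_trans (T.Lf_mono e hd1) hcon
    linarith [hx.2]

lemma mem_interval_iff {x : ℝ} {α : Fin T.d} :
    x ∈ T.interval α ↔ T.lep α ≤ x ∧ x < T.lep α + T.len α := Iff.rfl

lemma mem_intervalImg_iff {x : ℝ} {α : Fin T.d} :
    x ∈ T.intervalImg α ↔ T.lepImg α ≤ x ∧ x < T.lepImg α + T.len α := Iff.rfl

lemma interval_eq_Ico_L (α : Fin T.d) :
    T.interval α = Set.Ico (T.L T.perm0 α) (T.L T.perm0 α + T.len α) := rfl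

lemma intervalImg_eq_Ico_L (α : Fin T.d) :
    T.intervalImg α = Set.Ico (T.L T.perm1 α) (T.L T.perm1 α + T.len α) := rfl

lemma interval_subset (α : Fin T.d) : T.interval α ⊆ Set.Ico T.a T.b := by
  rw [interval_eq_Ico_L]; exact T.Ico_L_subset T.perm0 α

lemma intervalImg_subset (α : Fin T.d) : T.intervalImg α ⊆ Set.Ico T.a T.b := by
  rw [intervalImg_eq_Ico_L]; exact T.Ico_L_subset T.perm1 α

lemma lep_mem_interval (α : Fin T.d) : T.lep α ∈ T.interval α := by
  rw [interval_eq_Ico_L, lep_eq_L]; exact T.L_mem_Ico T.perm0 α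

lemma lepImg_mem_intervalImg (α : Fin T.d) : T.lepImg α ∈ T.intervalImg α := by
  rw [intervalImg_eq_Ico_L, lepImg_eq_L]; exact T.L_mem_Ico T.perm1 α

lemma lep_mem_Ico (α : Fin T.d) : T.lep α ∈ Set.Ico T.a T.b :=
  T.interval_subset α (T.lep_mem_interval α)

lemma mem_interval_unique {x : ℝ} {α α' : Fin T.d}
    (h : x ∈ T.interval α) (h' : x ∈ T.interval α') : α = α' := by
  by_contra hne
  rw [interval_eq_Ico_L] at h h'
  exact Set.disjoint_left.mp (T.disjoint_Ico_L T.perm0 hne) h h'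

lemma mem_intervalImg_unique {x : ℝ} {α α' : Fin T.d}
    (h : x ∈ T.intervalImg α) (h' : x ∈ T.intervalImg α') : α = α' := by
  by_contra hne
  rw [intervalImg_eq_Ico_L] at h h'
  exact Set.disjoint_left.mp (T.disjoint_Ico_L T.perm1 hne) h h'

lemma exists_interval {x : ℝ} (hx : x ∈ Set.Ico T.a T.b) : ∃ α, x ∈ T.interval α := by
  obtain ⟨α, hα⟩ := T.exists_mem_Ico_L T.perm0 hx
  exact ⟨α, by rw [interval_eq_Ico_L]; exact hα⟩

lemma exists_intervalImg {x : ℝ} (hx : x ∈ Set.Ico T.a T.b) : ∃ α, x ∈ T.intervalImg α := by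
  obtain ⟨α, hα⟩ := T.exists_mem_Ico_L T.perm1 hx
  exact ⟨α, by rw [intervalImg_eq_Ico_L]; exact hα⟩

lemma toFun_eq_of_mem {x : ℝ} {α : Fin T.d} (h : x ∈ T.interval α) :
    T.toFun x = x + T.transl α := by
  unfold IET.toFun
  congr 1
  rw [Finset.sum_eq_single α]
  · rw [if_pos h]
  · intro β _ hβ
    rw [if_neg]
    exact fun hmem => hβ (T.mem_interval_unique hmem h)
  · intro h'; exact absurd (Finset.mem_univ α) h'

lemma invFun_eq_of_mem {x : ℝ} {α : Fin T.d} (h : x ∈ T.intervalImg α) :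
    T.invFun x = x - T.transl α := by
  unfold IET.invFun
  rw [Finset.sum_eq_single α]
  · rw [if_pos h]; ring
  · intro β _ hβ
    rw [if_neg]
    exact fun hmem => hβ (T.mem_intervalImg_unique hmem h)
  · intro h'; exact absurd (Finset.mem_univ α) h'

lemma toFun_of_not_mem {x : ℝ} (h : x ∉ Set.Ico T.a T.b) : T.toFun x = x := by
  unfold IET.toFun
  rw [Finset.sum_eq_zero, add_zero]
  intro β _
  rw [if_neg]
  exact fun hm => h (T.interval_subset β hm)

lemma add_transl_mem {x : ℝ} {α : Fin T.d} (h : x ∈ T.interval α) :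
    x + T.transl α ∈ T.intervalImg α := by
  obtain ⟨h1, h2⟩ := T.mem_interval_iff.mp h
  unfold IET.transl
  rw [mem_intervalImg_iff]
  constructor <;> [linarith; linarith]

lemma sub_transl_mem {x : ℝ} {α : Fin T.d} (h : x ∈ T.intervalImg α) :
    x - T.transl α ∈ T.interval α := by
  obtain ⟨h1, h2⟩ := T.mem_intervalImg_iff.mp h
  unfold IET.transl
  rw [mem_interval_iff]
  constructor <;> [linarith; linarith]

lemma left_inv {x : ℝ} (hx : x ∈ Set.Ico T.a T.b) : T.invFun (T.toFun x) = x := by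
  obtain ⟨α, hα⟩ := T.exists_interval hx
  rw [T.toFun_eq_of_mem hα, T.invFun_eq_of_mem (T.add_transl_mem hα)]
  ring

lemma right_inv {x : ℝ} (hx : x ∈ Set.Ico T.a T.b) : T.toFun (T.invFun x) = x := by
  obtain ⟨α, hα⟩ := T.exists_intervalImg hx
  rw [T.invFun_eq_of_mem hα, T.toFun_eq_of_mem (T.sub_transl_mem hα)]
  ring

lemma toFun_mem {x : ℝ} (hx : x ∈ Set.Ico T.a T.b) : T.toFun x ∈ Set.Ico T.a T.b := by
  obtain ⟨α, hα⟩ := T.exists_interval hx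
  rw [T.toFun_eq_of_mem hα]
  exact T.intervalImg_subset α (T.add_transl_mem hα)

lemma invFun_mem {x : ℝ} (hx : x ∈ Set.Ico T.a T.b) : T.invFun x ∈ Set.Ico T.a T.b := by
  obtain ⟨α, hα⟩ := T.exists_intervalImg hx
  rw [T.invFun_eq_of_mem hα]
  exact T.interval_subset α (T.sub_transl_mem hα)

lemma lep_eq_a {α : Fin T.d} (h : (T.perm0 α : ℕ) = 0) : T.lep α = T.a := by
  rw [lep_eq_L, L_eq_Lf, h, Lf_zero]

lemma lepImg_eq_a {α : Fin T.d} (h : (T.perm1 α : ℕ) = 0) : T.lepImg α = T.a := by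
  rw [lepImg_eq_L, L_eq_Lf, h, Lf_zero]

lemma invFun_a : T.invFun T.a = T.lep (T.perm1.symm ⟨0, T.hd⟩) := by
  set α₀ := T.perm1.symm ⟨0, T.hd⟩ with hα₀
  have h0 : (T.perm1 α₀ : ℕ) = 0 := by simp [hα₀]
  have him : T.a ∈ T.intervalImg α₀ := by
    rw [← T.lepImg_eq_a h0]; exact T.lepImg_mem_intervalImg α₀
  rw [T.invFun_eq_of_mem him]
  unfold IET.transl
  rw [T.lepImg_eq_a h0]
  ring

end IET


/-- an ergodic IET has a letter `β ≠ π₀⁻¹(1)` with `M(β) = ∞`, i.e. whose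
backward orbit of `∂I_β` never hits a left endpoint `∂I_α` with `π₁ α ≠ 1`. -/
theorem stmt4 (T : IET)
    (hErg : Ergodic T.toFun (volume.restrict (Set.Ico T.a T.b))) :
    ∃ β : Fin T.d, (T.perm0 β : ℕ) ≠ 0 ∧ T.M β = ⊤ ∧
      ∀ n : ℕ, 1 ≤ n → ∀ α : Fin T.d, (T.perm1 α : ℕ) ≠ 0 →
        T.invFun^[n] (T.lep β) ≠ T.lep α := by
  classical
  by_contra hgoal
  push_neg at hgoal
  -- From the negation, every β with π₀ β ≠ 1 admits a connection.
  have hcon : ∀ β, (T.perm0 β : ℕ) ≠ 0 →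
      ∃ n, 1 ≤ n ∧ ∃ α, (T.perm1 α : ℕ) ≠ 0 ∧ T.invFun^[n] (T.lep β) = T.lep α := by
    intro β hβ
    by_cases hM : T.M β = ⊤
    · obtain ⟨n, hn1, α, hα, heq⟩ := hgoal β hβ hM
      exact ⟨n, hn1, α, hα, heq⟩
    · unfold IET.M at hM
      rw [if_neg hβ] at hM
      by_cases hemp : {e : ℕ∞ | ∃ n : ℕ, e = (n : ℕ∞) ∧ 1 ≤ n ∧
          ∃ α : Fin T.d, (T.perm1 α : ℕ) ≠ 0 ∧ T.invFun^[n] (T.lep β) = T.lep α} = ∅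
      · rw [hemp, sInf_empty] at hM
        exact absurd rfl hM
      · obtain ⟨x, n, _, h1, α, hα, heq⟩ := Set.nonempty_iff_ne_empty.mpr hemp
        exact ⟨n, h1, α, hα, heq⟩
  -- connection data
  set nfun : Fin T.d → ℕ :=
    fun β => if h : (T.perm0 β : ℕ) ≠ 0 then (hcon β h).choose else 0 with hnfun
  have nspec : ∀ β (h : (T.perm0 β : ℕ) ≠ 0), 1 ≤ nfun β ∧
      ∃ α, (T.perm1 α : ℕ) ≠ 0 ∧ T.invFun^[nfun β] (T.lep β) = T.lep α := by
    intro β h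
    have : nfun β = (hcon β h).choose := by rw [hnfun]; simp only [dif_pos h]
    rw [this]
    exact (hcon β h).choose_spec
  have nzero : ∀ β, (T.perm0 β : ℕ) = 0 → nfun β = 0 := by
    intro β h
    rw [hnfun]
    exact dif_neg (not_not_intro h)
  -- the finite invariant set
  set S : Set ℝ := ⋃ β, (fun k => T.invFun^[k] (T.lep β)) '' Set.Iic (nfun β) with hS
  have hSfin : S.Finite := Set.finite_iUnion fun β => (Set.finite_Iic _).image _
  have hlepS : ∀ α, T.lep α ∈ S := fun α =>
    Set.mem_iUnion.mpr ⟨α, 0, Set.mem_Iic.mpr (Nat.zero_le _), by simp⟩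
  have haS : T.a ∈ S := by
    have := hlepS (T.perm0.symm ⟨0, T.hd⟩)
    rwa [T.lep_eq_a (by simp)] at this
  have hinvA : T.invFun T.a ∈ S := by rw [T.invFun_a]; exact hlepS _
  have hstep : ∀ α : Fin T.d, T.invFun (T.lep α) ∈ S := by
    intro α
    by_cases h0 : (T.perm0 α : ℕ) = 0
    · rw [T.lep_eq_a h0]; exact hinvA
    · obtain ⟨h1, -⟩ := nspec α h0
      refine Set.mem_iUnion.mpr ⟨α, 1, Set.mem_Iic.mpr h1, ?_⟩
      simp
  have hmaps : Set.MapsTo T.invFun S S := by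
    rintro x hx
    obtain ⟨β, hmem⟩ := Set.mem_iUnion.mp hx
    obtain ⟨k, hk, rfl⟩ := hmem
    rcases Nat.lt_or_ge k (nfun β) with hlt | hge
    · exact Set.mem_iUnion.mpr ⟨β, k + 1, Set.mem_Iic.mpr hlt,
        Function.iterate_succ_apply' _ _ _⟩
    · have hk' : k = nfun β := le_antisymm (Set.mem_Iic.mp hk) hge
      by_cases h0 : (T.perm0 β : ℕ) = 0
      · have hnz : nfun β = 0 := nzero β h0
        have : (fun k => T.invFun^[k] (T.lep β)) k = T.lep β := by
          rw [hk', hnz]; simp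
        rw [this]
        exact hstep β
      · obtain ⟨h1, α, hα, heq⟩ := nspec β h0
        have : (fun k => T.invFun^[k] (T.lep β)) k = T.lep α := by
          rw [hk']; exact heq
        rw [this]
        exact hstep α
  have hIcoMaps : Set.MapsTo T.invFun (Set.Ico T.a T.b) (Set.Ico T.a T.b) :=
    fun x hx => T.invFun_mem hx
  have hSsub : S ⊆ Set.Ico T.a T.b := by
    rintro x hx
    obtain ⟨β, hmem⟩ := Set.mem_iUnion.mp hx
    obtain ⟨k, -, rfl⟩ := hmem
    exact (hIcoMaps.iterate k) (T.lep_mem_Ico β)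
  have hinj : Set.InjOn T.invFun S := by
    intro x hx y hy h
    have := congrArg T.toFun h
    rwa [T.right_inv (hSsub hx), T.right_inv (hSsub hy)] at this
  have hbij := (hSfin.injOn_iff_bijOn_of_mapsTo hmaps).mp hinj
  have hsurj : ∀ s ∈ S, T.toFun s ∈ S := by
    intro s hs
    obtain ⟨t, ht, hts⟩ := hbij.surjOn hs
    have : T.toFun s = t := by rw [← hts, T.right_inv (hSsub ht)]
    rw [this]; exact ht
  have hSimg : T.toFun '' S = S := by
    apply Set.Subset.antisymm
    · rintro _ ⟨s, hs, rfl⟩; exact hsurj s hs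
    · intro s hs
      exact ⟨T.invFun s, hmaps hs, T.right_inv (hSsub hs)⟩
  -- choose the interval containing each point of S
  have hcov : ∀ s ∈ S, ∃ α, s ∈ T.interval α := fun s hs => T.exists_interval (hSsub hs)
  have : Nonempty (Fin T.d) := ⟨⟨0, T.hd⟩⟩
  choose! αof hαof using hcov
  set F := hSfin.toFinset with hF
  have hmemF : ∀ {s : ℝ}, s ∈ F ↔ s ∈ S := fun {s} => hSfin.mem_toFinset
  have hFne : F.Nonempty := ⟨T.a, hmemF.mpr haS⟩
  set gap : ℝ → ℝ := fun s => T.lep (αof s) + T.len (αof s) - s with hgap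
  set ε₁ := F.inf' hFne gap with hε₁
  have hε₁pos : 0 < ε₁ := by
    rw [hε₁, Finset.lt_inf'_iff]
    intro s hs
    obtain ⟨-, h2⟩ := T.mem_interval_iff.mp (hαof s (hmemF.mp hs))
    simp only [hgap]
    linarith
  set n := F.card with hn
  have hden : (0:ℝ) < (n : ℝ) + 1 := by positivity
  set ε := min ε₁ ((T.b - T.a) / ((n : ℝ) + 1)) with hε
  have hεpos : 0 < ε := lt_min hε₁pos (div_pos (by linarith [T.hab]) hden)
  have hεgap : ∀ s ∈ S, ε ≤ gap s := fun s hs =>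
    le_trans (min_le_left _ _) (Finset.inf'_le gap (hmemF.mpr hs))
  -- the invariant set of positive, non-full measure
  set A : Set ℝ := ⋃ s ∈ F, Set.Ico s (s + ε) with hA
  have hIcoSubInt : ∀ s ∈ S, Set.Ico s (s + ε) ⊆ T.interval (αof s) := by
    intro s hs x hx
    obtain ⟨h1, h2⟩ := hx
    obtain ⟨g1, g2⟩ := T.mem_interval_iff.mp (hαof s hs)
    have hg := hεgap s hs
    simp only [hgap] at hg
    exact T.mem_interval_iff.mpr ⟨le_trans g1 h1, by linarith⟩
  have hIcoSub : ∀ s ∈ S, Set.Ico s (s + ε) ⊆ Set.Ico T.a T.b := fun s hs =>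
    le_trans (hIcoSubInt s hs) (T.interval_subset (αof s))
  have hAsub : A ⊆ Set.Ico T.a T.b := by
    rw [hA]
    exact Set.iUnion₂_subset fun s hs => hIcoSub s (hmemF.mp hs)
  have himg : ∀ s ∈ S, T.toFun '' Set.Ico s (s + ε)
      = Set.Ico (T.toFun s) (T.toFun s + ε) := by
    intro s hs
    have hα := hαof s hs
    have hts : T.toFun s = s + T.transl (αof s) := T.toFun_eq_of_mem hα
    ext y
    constructor
    · rintro ⟨x, hx, rfl⟩
      obtain ⟨h1, h2⟩ := hx
      rw [T.toFun_eq_of_mem (hIcoSubInt s hs ⟨h1, h2⟩), hts]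
      exact ⟨by linarith, by linarith⟩
    · rintro ⟨h1, h2⟩
      rw [hts] at h1 h2
      have hx : y - T.transl (αof s) ∈ Set.Ico s (s + ε) := ⟨by linarith, by linarith⟩
      refine ⟨y - T.transl (αof s), hx, ?_⟩
      rw [T.toFun_eq_of_mem (hIcoSubInt s hs hx)]
      ring
  have hinjT : Set.InjOn T.toFun (Set.Ico T.a T.b) := by
    intro x hx y hy h
    have := congrArg T.invFun h
    rwa [T.left_inv hx, T.left_inv hy] at this
  have hpre : T.toFun ⁻¹' A = A := by
    ext x
    simp only [Set.mem_preimage]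
    constructor
    · intro hx
      by_cases hxI : x ∈ Set.Ico T.a T.b
      · rw [hA] at hx
        obtain ⟨s, hsF, hmem⟩ := Set.mem_iUnion₂.mp hx
        have hsS : s ∈ S := hmemF.mp hsF
        obtain ⟨t, ht, hts⟩ := by rw [← hSimg] at hsS; exact hsS
        have hmem' : T.toFun x ∈ T.toFun '' Set.Ico t (t + ε) := by
          rw [himg t ht, hts]; exact hmem
        obtain ⟨y, hy, hyx⟩ := hmem'
        have hyI : y ∈ Set.Ico T.a T.b := hIcoSub t ht hy
        have : y = x := hinjT hyI hxI hyx
        rw [hA]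
        exact Set.mem_iUnion₂.mpr ⟨t, hmemF.mpr ht, this ▸ hy⟩
      · rw [T.toFun_of_not_mem hxI] at hx
        exact hx
    · intro hx
      rw [hA] at hx
      obtain ⟨s, hsF, hmem⟩ := Set.mem_iUnion₂.mp hx
      have hsS : s ∈ S := hmemF.mp hsF
      have : T.toFun x ∈ T.toFun '' Set.Ico s (s + ε) := ⟨x, hmem, rfl⟩
      rw [himg s hsS] at this
      rw [hA]
      exact Set.mem_iUnion₂.mpr ⟨T.toFun s, hmemF.mpr (hsurj s hsS), this⟩
  have hAmeas : MeasurableSet A := by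
    rw [hA]
    exact MeasurableSet.biUnion F.countable_toSet (fun s _ => measurableSet_Ico)
  rcases hErg.ae_empty_or_univ hAmeas hpre with hemp | huniv
  · -- A has positive measure: contradiction
    have h0 : (volume.restrict (Set.Ico T.a T.b)) A = 0 := ae_eq_empty.mp hemp
    rw [Measure.restrict_apply hAmeas] at h0
    have hsubA : Set.Ico T.a (T.a + ε) ⊆ A ∩ Set.Ico T.a T.b := fun x hx =>
      ⟨Set.mem_iUnion₂.mpr ⟨T.a, hmemF.mpr haS, hx⟩, hIcoSub T.a haS hx⟩
    have := measure_mono (μ := volume) hsubA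
    rw [h0, Real.volume_Ico] at this
    simp only [add_sub_cancel_left] at this
    rw [nonpos_iff_eq_zero] at this
    exact absurd this (ne_of_gt (ENNReal.ofReal_pos.mpr hεpos))
  · -- complement of A has positive measure: contradiction
    have h0 : (volume.restrict (Set.Ico T.a T.b)) Aᶜ = 0 := ae_eq_univ.mp huniv
    rw [Measure.restrict_apply hAmeas.compl] at h0
    have hvolA : volume A ≤ (n : ENNReal) * ENNReal.ofReal ε := by
      rw [hA]
      have h1 : volume (⋃ s ∈ F, Set.Ico s (s + ε)) ≤ ∑ s ∈ F, volume (Set.Ico s (s + ε)) :=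
        measure_biUnion_finset_le F _
      have h2 : ∑ s ∈ F, volume (Set.Ico s (s + ε)) = (n : ENNReal) * ENNReal.ofReal ε := by
        have h3 : ∀ s ∈ F, volume (Set.Ico s (s + ε)) = ENNReal.ofReal ε := by
          intro s _
          rw [Real.volume_Ico, add_sub_cancel_left]
        rw [Finset.sum_congr rfl h3, Finset.sum_const, hn, nsmul_eq_mul]
      exact h1.trans (le_of_eq h2)
    have hIcoLe : volume (Set.Ico T.a T.b) ≤ volume (Aᶜ ∩ Set.Ico T.a T.b) + volume A := by
      refine le_trans (measure_mono ?_) (measure_union_le _ _)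
      intro x hx
      by_cases hxA : x ∈ A
      · exact Or.inr hxA
      · exact Or.inl ⟨hxA, hx⟩
    rw [h0, zero_add] at hIcoLe
    have hle := le_trans hIcoLe hvolA
    have hcast : (n : ENNReal) * ENNReal.ofReal ε = ENNReal.ofReal ((n : ℝ) * ε) := by
      rw [ENNReal.ofReal_mul (p := (n : ℝ)) (Nat.cast_nonneg n)]
      congr 1
      exact (ENNReal.ofReal_natCast n).symm
    rw [Real.volume_Ico, hcast] at hle
    have hba : T.b - T.a ≤ (n : ℝ) * ε :=
      (ENNReal.ofReal_le_ofReal_iff (mul_nonneg (Nat.cast_nonneg n) hεpos.le)).mp hle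
    have hnε : (n : ℝ) * ε < T.b - T.a := by
      have hεle : ε ≤ (T.b - T.a) / ((n : ℝ) + 1) := min_le_right _ _
      have h1 : (n : ℝ) * ε ≤ (n : ℝ) * ((T.b - T.a) / ((n : ℝ) + 1)) :=
        mul_le_mul_of_nonneg_left hεle (Nat.cast_nonneg n)
      have h2 : (n : ℝ) * ((T.b - T.a) / ((n : ℝ) + 1)) < T.b - T.a := by
        have hq : (0:ℝ) < (T.b - T.a) / ((n : ℝ) + 1) := div_pos (by linarith [T.hab]) hden
        have h3 : ((n : ℝ) + 1) * ((T.b - T.a) / ((n : ℝ) + 1)) = T.b - T.a :=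
          mul_div_cancel₀ _ (ne_of_gt hden)
        have h4 : ((n : ℝ) + 1) * ((T.b - T.a) / ((n : ℝ) + 1))
            = (n : ℝ) * ((T.b - T.a) / ((n : ℝ) + 1)) + (T.b - T.a) / ((n : ℝ) + 1) := by ring
        linarith
      linarith
    linarith
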